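/- Consider the two-piece convex knapsack problem (CK) and assume the items are ordered so that β_1 ≥ β_2 ≥ … ≥ β_n, with ties broken so that whenever i < j and β_i = β_j one has u_i ≤ u_j. Then there exist an optimal solution x* of CK and an index f ∈ [n] such that x*_j ∈ {0, u_j} for every j < f and x*_j = 0 for every j > f (only the coordinate x*_f may lie strictly between 0 and u_f). -/

import Mathlib

lemma ck_sum_pair {n : ℕ} (j k : Fin n) (hjk : j ≠ k) (A B : ℝ) :
    ∑ i, (if i = j then A else if i = k then B else 0) = A + B := by
  classical
  have h : ∀ i : Fin n, (if i = j then A else if i = k then B else 0) =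
      (if i = j then A else 0) + (if i = k then B else 0) := by
    intro i; by_cases h1 : i = j
    · subst h1; simp [hjk]
    · by_cases h2 : i = k <;> simp [h1, h2, Ne.symm hjk]
  rw [Finset.sum_congr rfl (fun i _ => h i), Finset.sum_add_distrib]
  simp

lemma ck_sum_update {n : ℕ} (g : Fin n → ℝ → ℝ) (x : Fin n → ℝ) (j : Fin n) (c : ℝ) :
    ∑ i, g i (Function.update x j c i) = ∑ i, g i (x i) - g j (x j) + g j c := by
  classical
  rw [← Finset.add_sum_erase _ (fun i => g i (Function.update x j c i)) (Finset.mem_univ j),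
      ← Finset.add_sum_erase _ (fun i => g i (x i)) (Finset.mem_univ j)]
  simp only [Function.update_self]
  have h : ∑ i ∈ Finset.univ.erase j, g i (Function.update x j c i)
       = ∑ i ∈ Finset.univ.erase j, g i (x i) :=
    Finset.sum_congr rfl fun i hi => by
      rw [Function.update_of_ne (Finset.ne_of_mem_erase hi)]
  rw [h]; ring

lemma ck_sum_update_max {n : ℕ} (γ β : Fin n → ℝ) (x : Fin n → ℝ) (j : Fin n) (c : ℝ) :
    ∑ i, max (γ i + β i * Function.update x j c i) 0 =
      (∑ i, max (γ i + β i * x i) 0) - max (γ j + β j * x j) 0 + max (γ j + β j * c) 0 :=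
  ck_sum_update (fun i t => max (γ i + β i * t) 0) x j c

lemma ck_sum_update_id {n : ℕ} (x : Fin n → ℝ) (j : Fin n) (c : ℝ) :
    ∑ i, Function.update x j c i = (∑ i, x i) - x j + c := by
  have h := ck_sum_update (fun _ t => t) x j c
  simpa using h

lemma ck_cvx (c d a b : ℝ) (ha : 0 < a) (hb : 0 < b) :
    max c 0 ≤ (b/(a+b)) * max (c - a*d) 0 + (a/(a+b)) * max (c + b*d) 0 := by
  have hab : 0 < a + b := by linarith
  have h1 : c - a*d ≤ max (c - a*d) 0 := le_max_left _ _
  have h2 : c + b*d ≤ max (c + b*d) 0 := le_max_left _ _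
  have h3 : (0:ℝ) ≤ max (c - a*d) 0 := le_max_right _ _
  have h4 : (0:ℝ) ≤ max (c + b*d) 0 := le_max_right _ _
  apply max_le
  · rw [div_mul_eq_mul_div, div_mul_eq_mul_div, ← add_div, le_div_iff₀ hab]
    nlinarith
  · positivity

set_option maxHeartbeats 1000000 in
theorem stmt_10 (n : ℕ) (hn : 1 ≤ n) (γ β u : Fin n → ℝ)
    (hβ : ∀ j, 0 < β j) (hu : ∀ j, 0 < u j) (hpos : ∀ j, 0 < γ j + β j * u j)
    (Ω : ℝ) (hΩ : 0 < Ω)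
    (hord : ∀ i j : Fin n, i ≤ j → β j ≤ β i)
    (htie : ∀ i j : Fin n, i < j → β i = β j → u i ≤ u j) :
    ∃ (xstar : Fin n → ℝ) (f : Fin n),
      ((∀ j, 0 ≤ xstar j ∧ xstar j ≤ u j) ∧ ∑ j, xstar j ≤ Ω) ∧
      IsGreatest ((fun x : Fin n → ℝ => ∑ j, max (γ j + β j * x j) 0) ''
          {x | (∀ j, 0 ≤ x j ∧ x j ≤ u j) ∧ ∑ j, x j ≤ Ω})
        (∑ j, max (γ j + β j * xstar j) 0) ∧
      (∀ j : Fin n, j < f → xstar j = 0 ∨ xstar j = u j) ∧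
      (∀ j : Fin n, f < j → xstar j = 0) := by
  classical
  set P : (Fin n → ℝ) → ℝ := fun x => ∑ j, max (γ j + β j * x j) 0 with hPdef
  set S : Set (Fin n → ℝ) := {x | (∀ j, 0 ≤ x j ∧ x j ≤ u j) ∧ ∑ j, x j ≤ Ω} with hSdef
  have hsumcont : Continuous (fun x : Fin n → ℝ => ∑ j, x j) :=
    continuous_finset_sum _ fun i _ => continuous_apply i
  have hPcont : Continuous P := by
    apply continuous_finset_sum
    intro i _
    exact (continuous_const.add (continuous_const.mul (continuous_apply i))).max continuous_const
  have hScomp : IsCompact S := by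
    have hbox : IsCompact (Set.pi Set.univ fun j : Fin n => Set.Icc (0:ℝ) (u j)) :=
      isCompact_univ_pi fun j => isCompact_Icc
    have hSeq : S = (Set.pi Set.univ fun j : Fin n => Set.Icc (0:ℝ) (u j)) ∩
        {x | ∑ j, x j ≤ Ω} := by
      ext x
      simp only [hSdef, Set.mem_setOf_eq, Set.mem_inter_iff, Set.mem_pi, Set.mem_univ,
        Set.mem_Icc, forall_true_left, true_implies]
    rw [hSeq]
    exact hbox.inter_right (isClosed_le hsumcont continuous_const)
  have hSne : S.Nonempty := by
    refine ⟨0, fun j => ⟨le_refl _, (hu j).le⟩, ?_⟩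
    simp [hΩ.le]
  obtain ⟨x0, hx0S, hx0⟩ := hScomp.exists_isMaxOn hSne hPcont.continuousOn
  set M1 : Set (Fin n → ℝ) := S ∩ {x | P x = P x0} with hM1def
  have hM1comp : IsCompact M1 := hScomp.inter_right (isClosed_eq hPcont continuous_const)
  have hM1ne : M1.Nonempty := ⟨x0, hx0S, rfl⟩
  obtain ⟨x1, hx1M, hx1⟩ := hM1comp.exists_isMinOn hM1ne hsumcont.continuousOn
  set M2 : Set (Fin n → ℝ) := M1 ∩ {x | ∑ j, x j = ∑ j, x1 j} with hM2def
  have hM2comp : IsCompact M2 := hM1comp.inter_right (isClosed_eq hsumcont continuous_const)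
  have hM2ne : M2.Nonempty := ⟨x1, hx1M, rfl⟩
  set w : Fin n → ℝ := fun i => (n : ℝ) - (i : ℕ) with hwdef
  set Φ : (Fin n → ℝ) → ℝ := fun x => ∑ i, w i * x i with hΦdef
  have hΦcont : Continuous Φ :=
    continuous_finset_sum _ fun i _ => continuous_const.mul (continuous_apply i)
  obtain ⟨z, hzM2, hz⟩ := hM2comp.exists_isMaxOn hM2ne hΦcont.continuousOn
  have hzS : z ∈ S := hzM2.1.1
  have hzP : P z = P x0 := hzM2.1.2
  have hzsum : ∑ j, z j = ∑ j, x1 j := hzM2.2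
  have hfeas : ∀ j, 0 ≤ z j ∧ z j ≤ u j := hzS.1
  have hzΩ : ∑ j, z j ≤ Ω := hzS.2
  have Fopt : ∀ y ∈ S, P y ≤ P z := fun y hy => (hx0 hy).trans_eq hzP.symm
  have Fsum : ∀ y ∈ S, P y = P z → ∑ j, z j ≤ ∑ j, y j := by
    intro y hy hPy
    rw [hzsum]
    exact hx1 ⟨hy, hPy.trans hzP⟩
  have FΦ : ∀ y ∈ S, P y = P z → ∑ j, y j = ∑ j, z j → Φ y ≤ Φ z := by
    intro y hy h1 h2
    exact hz ⟨⟨hy, h1.trans hzP⟩, h2.trans hzsum⟩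
  have hwlt : ∀ j k : Fin n, j < k → w k < w j := by
    intro j k hjk
    have : ((j : ℕ) : ℝ) < ((k : ℕ) : ℝ) := by exact_mod_cast hjk
    simp only [hwdef]
    linarith
  -- Claim (i): positive coordinates are in the nonnegative region
  have claim1 : ∀ j, 0 < z j → 0 ≤ γ j + β j * z j := by
    intro j hj
    by_contra hneg
    push_neg at hneg
    have hsy : ∑ i, Function.update z j 0 i = (∑ i, z i) - z j + 0 := ck_sum_update_id z j 0
    have hyS : Function.update z j 0 ∈ S := by
      constructor
      · intro i
        by_cases hi : i = j
        · subst hi; simp [(hu i).le]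
        · rw [Function.update_of_ne hi]; exact hfeas i
      · show ∑ i, Function.update z j 0 i ≤ Ω
        rw [hsy]
        linarith
    have hγneg : γ j ≤ 0 := by nlinarith [mul_pos (hβ j) hj]
    have hPy : P (Function.update z j 0) = P z := by
      show (∑ i, max (γ i + β i * Function.update z j 0 i) 0) = ∑ i, max (γ i + β i * z i) 0
      rw [ck_sum_update_max]
      rw [max_eq_right hneg.le, max_eq_right (by nlinarith : γ j + β j * 0 ≤ 0)]
      ring
    have h := Fsum _ hyS hPy
    rw [hsy] at h
    linarith
  -- Claim (ii): at most one fractional coordinate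
  have claim2 : ∀ j k : Fin n, j < k → 0 < z j → z j < u j → 0 < z k → z k < u k → False := by
    intro j k hjk h0j huj h0k huk
    have hne : j ≠ k := Fin.ne_of_lt hjk
    set a : ℝ := min (z j) (u k - z k) with hadef
    set b : ℝ := min (u j - z j) (z k) with hbdef
    have ha0 : 0 < a := lt_min h0j (by linarith)
    have hb0 : 0 < b := lt_min (by linarith) h0k
    set d : Fin n → ℝ := fun i => if i = j then 1 else if i = k then -1 else 0 with hddef
    have hdj : d j = 1 := by simp [hddef]
    have hdk : d k = -1 := by simp [hddef, Ne.symm hne]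
    have hdo : ∀ i, i ≠ j → i ≠ k → d i = 0 := by intro i h1 h2; simp [hddef, h1, h2]
    have hds : ∑ i, d i = 0 := by
      simp only [hddef]
      rw [ck_sum_pair j k hne]
      norm_num
    have hwd : ∑ i, w i * d i = w j - w k := by
      have h : ∀ i, w i * d i = (if i = j then w j else if i = k then -(w k) else 0) := by
        intro i
        by_cases h1 : i = j <;> by_cases h2 : i = k <;> simp [hddef, h1, h2, Ne.symm hne]
      rw [Finset.sum_congr rfl (fun i _ => h i), ck_sum_pair j k hne]
      ring
    have hfeasy : ∀ t : ℝ, -a ≤ t → t ≤ b → (fun i => z i + t * d i) ∈ S := by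
      intro t ht1 ht2
      constructor
      · intro i
        show 0 ≤ z i + t * d i ∧ z i + t * d i ≤ u i
        by_cases h1 : i = j
        · subst h1
          rw [hdj]
          refine ⟨?_, ?_⟩
          · have : a ≤ z i := min_le_left _ _
            nlinarith
          · have : b ≤ u i - z i := min_le_left _ _
            nlinarith
        · by_cases h2 : i = k
          · subst h2
            rw [hdk]
            refine ⟨?_, ?_⟩
            · have : b ≤ z i := min_le_right _ _
              nlinarith
            · have : a ≤ u i - z i := min_le_right _ _
              nlinarith
          · rw [hdo i h1 h2]
            simpa using hfeas i
      · show ∑ i, (z i + t * d i) ≤ Ω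
        rw [Finset.sum_add_distrib, ← Finset.mul_sum, hds]
        simpa using hzΩ
    have hyAS : (fun i => z i + (-a) * d i) ∈ S := hfeasy (-a) (le_refl _) (by linarith)
    have hyBS : (fun i => z i + b * d i) ∈ S := hfeasy b (by linarith) (le_refl _)
    have hconv : P z ≤ (b/(a+b)) * P (fun i => z i + (-a) * d i)
        + (a/(a+b)) * P (fun i => z i + b * d i) := by
      have hterm : ∀ i : Fin n, max (γ i + β i * z i) 0 ≤
          (b/(a+b)) * max (γ i + β i * (z i + (-a) * d i)) 0
          + (a/(a+b)) * max (γ i + β i * (z i + b * d i)) 0 := by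
        intro i
        have h := ck_cvx (γ i + β i * z i) (β i * d i) a b ha0 hb0
        have e1 : γ i + β i * (z i + (-a) * d i) = γ i + β i * z i - a * (β i * d i) := by ring
        have e2 : γ i + β i * (z i + b * d i) = γ i + β i * z i + b * (β i * d i) := by ring
        rw [e1, e2]; exact h
      calc P z ≤ ∑ i, ((b/(a+b)) * max (γ i + β i * (z i + (-a) * d i)) 0 +
          (a/(a+b)) * max (γ i + β i * (z i + b * d i)) 0) :=
            Finset.sum_le_sum fun i _ => hterm i
        _ = _ := by
          rw [Finset.sum_add_distrib, ← Finset.mul_sum, ← Finset.mul_sum]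
    have hPA : P (fun i => z i + (-a) * d i) ≤ P z := Fopt _ hyAS
    have hPB : P (fun i => z i + b * d i) ≤ P z := Fopt _ hyBS
    have hab : 0 < a + b := by linarith
    have hmu : 0 < a/(a+b) := by positivity
    have hlam : 0 < b/(a+b) := by positivity
    have hlm : b/(a+b) + a/(a+b) = 1 := by field_simp; ring
    have hintA : (b/(a+b)) * P (fun i => z i + (-a) * d i) ≤ (b/(a+b)) * P z :=
      mul_le_mul_of_nonneg_left hPA hlam.le
    have hsplit : (b/(a+b)) * P z + (a/(a+b)) * P z = P z := by
      rw [← add_mul, hlm, one_mul]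
    have hmuineq : (a/(a+b)) * P z ≤ (a/(a+b)) * P (fun i => z i + b * d i) := by linarith
    have hPBeq : P (fun i => z i + b * d i) = P z :=
      le_antisymm hPB (le_of_mul_le_mul_left hmuineq hmu)
    have hsB : ∑ i, (z i + b * d i) = ∑ i, z i := by
      rw [Finset.sum_add_distrib, ← Finset.mul_sum, hds]
      ring
    have hΦB := FΦ _ hyBS hPBeq hsB
    have hΦeq : Φ (fun i => z i + b * d i) = Φ z + b * (w j - w k) := by
      show (∑ i, w i * (z i + b * d i)) = (∑ i, w i * z i) + b * (w j - w k)
      rw [← hwd, Finset.mul_sum, ← Finset.sum_add_distrib]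
      exact Finset.sum_congr rfl fun i _ => by ring
    have hwjk := hwlt j k hjk
    have hbpos : 0 < b * (w j - w k) := mul_pos hb0 (by linarith)
    linarith
  -- Claim (iii): nothing at its upper bound after the fractional coordinate
  have claim3 : ∀ f k : Fin n, f < k → 0 < z f → z f < u f → z k = u k → False := by
    intro f k hfk h0f hufb hzk
    have hne : f ≠ k := Fin.ne_of_lt hfk
    have hγf := claim1 f h0f
    set t : ℝ := min (u f - z f) (u k) with htdef
    have ht0 : 0 < t := lt_min (by linarith) (hu k)
    set d : Fin n → ℝ := fun i => if i = f then 1 else if i = k then -1 else 0 with hddef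
    have hdf : d f = 1 := by simp [hddef]
    have hdk : d k = -1 := by simp [hddef, Ne.symm hne]
    have hdo : ∀ i, i ≠ f → i ≠ k → d i = 0 := by intro i h1 h2; simp [hddef, h1, h2]
    have hds : ∑ i, d i = 0 := by
      simp only [hddef]
      rw [ck_sum_pair f k hne]
      norm_num
    have hwd : ∑ i, w i * d i = w f - w k := by
      have h : ∀ i, w i * d i = (if i = f then w f else if i = k then -(w k) else 0) := by
        intro i
        by_cases h1 : i = f <;> by_cases h2 : i = k <;> simp [hddef, h1, h2, Ne.symm hne]
      rw [Finset.sum_congr rfl (fun i _ => h i), ck_sum_pair f k hne]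
      ring
    have hyS : (fun i => z i + t * d i) ∈ S := by
      constructor
      · intro i
        show 0 ≤ z i + t * d i ∧ z i + t * d i ≤ u i
        by_cases h1 : i = f
        · subst h1
          rw [hdf]
          refine ⟨?_, ?_⟩
          · nlinarith [(hfeas i).1]
          · have : t ≤ u i - z i := min_le_left _ _
            nlinarith
        · by_cases h2 : i = k
          · subst h2
            rw [hdk]
            refine ⟨?_, ?_⟩
            · have : t ≤ u i := min_le_right _ _
              rw [hzk]; nlinarith
            · rw [hzk]; nlinarith
          · rw [hdo i h1 h2]
            simpa using hfeas i
      · show ∑ i, (z i + t * d i) ≤ Ω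
        rw [Finset.sum_add_distrib, ← Finset.mul_sum, hds]
        simpa using hzΩ
    have hes : ∑ i, (if i = f then β f else if i = k then -(β k) else 0 : ℝ) = β f - β k := by
      rw [ck_sum_pair f k hne]; ring
    have hlow : P z + t * (β f - β k) ≤ P (fun i => z i + t * d i) := by
      have hterm : ∀ i : Fin n, max (γ i + β i * z i) 0
          + t * (if i = f then β f else if i = k then -(β k) else 0)
          ≤ max (γ i + β i * (z i + t * d i)) 0 := by
        intro i
        by_cases h1 : i = f
        · subst h1
          rw [if_pos rfl, hdf]
          have hy' : γ i + β i * (z i + t * 1) = γ i + β i * z i + β i * t := by ring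
          rw [hy', max_eq_left hγf]
          calc γ i + β i * z i + t * β i = γ i + β i * z i + β i * t := by ring
            _ ≤ max (γ i + β i * z i + β i * t) 0 := le_max_left _ _
        · by_cases h2 : i = k
          · subst h2
            rw [if_neg h1, if_pos rfl, hdk]
            have hy' : γ i + β i * (z i + t * (-1)) = γ i + β i * u i - β i * t := by
              rw [hzk]; ring
            have hzi : γ i + β i * z i = γ i + β i * u i := by rw [hzk]
            rw [hy', hzi, max_eq_left (hpos i).le]
            calc γ i + β i * u i + t * -(β i) = γ i + β i * u i - β i * t := by ring
              _ ≤ max (γ i + β i * u i - β i * t) 0 := le_max_left _ _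
          · rw [if_neg h1, if_neg h2, hdo i h1 h2]
            simp
      calc P z + t * (β f - β k)
          = ∑ i, (max (γ i + β i * z i) 0
              + t * (if i = f then β f else if i = k then -(β k) else 0)) := by
            rw [Finset.sum_add_distrib, ← Finset.mul_sum, hes]
        _ ≤ ∑ i, max (γ i + β i * (z i + t * d i)) 0 := Finset.sum_le_sum fun i _ => hterm i
        _ = P (fun i => z i + t * d i) := rfl
    have hβord : β k ≤ β f := hord f k hfk.le
    have hup : P (fun i => z i + t * d i) ≤ P z := Fopt _ hyS
    have htnn : 0 ≤ t * (β f - β k) := mul_nonneg ht0.le (by linarith)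
    have hPeq : P (fun i => z i + t * d i) = P z := le_antisymm hup (by linarith)
    have hsy : ∑ i, (z i + t * d i) = ∑ i, z i := by
      rw [Finset.sum_add_distrib, ← Finset.mul_sum, hds]
      ring
    have hΦy := FΦ _ hyS hPeq hsy
    have hΦeq : Φ (fun i => z i + t * d i) = Φ z + t * (w f - w k) := by
      show (∑ i, w i * (z i + t * d i)) = (∑ i, w i * z i) + t * (w f - w k)
      rw [← hwd, Finset.mul_sum, ← Finset.sum_add_distrib]
      exact Finset.sum_congr rfl fun i _ => by ring
    have hwfk := hwlt f k hfk
    have htpos : 0 < t * (w f - w k) := mul_pos ht0 (by linarith)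
    linarith
  -- assemble
  have hbin : ∀ j : Fin n, ¬(0 < z j ∧ z j < u j) → z j = 0 ∨ z j = u j := by
    intro j hj
    rcases eq_or_lt_of_le (hfeas j).1 with h | h
    · exact Or.inl h.symm
    · rcases eq_or_lt_of_le (hfeas j).2 with h2 | h2
      · exact Or.inr h2
      · exact absurd ⟨h, h2⟩ hj
  by_cases hfr : ∃ f : Fin n, 0 < z f ∧ z f < u f
  · obtain ⟨f, hf1, hf2⟩ := hfr
    refine ⟨z, f, ⟨hzS.1, hzS.2⟩, ⟨⟨z, hzS, rfl⟩, ?_⟩, ?_, ?_⟩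
    · rintro p ⟨y, hy, rfl⟩
      exact Fopt y hy
    · intro j hj
      apply hbin
      rintro ⟨h1, h2⟩
      exact claim2 j f hj h1 h2 hf1 hf2
    · intro k hk
      rcases hbin k (fun hc => claim2 f k hk hf1 hf2 hc.1 hc.2) with h | h
      · exact h
      · exact absurd h (fun h => claim3 f k hk hf1 hf2 h)
  · push_neg at hfr
    refine ⟨z, ⟨n - 1, by omega⟩, ⟨hzS.1, hzS.2⟩, ⟨⟨z, hzS, rfl⟩, ?_⟩, ?_, ?_⟩
    · rintro p ⟨y, hy, rfl⟩
      exact Fopt y hy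
    · intro j hj
      apply hbin
      rintro ⟨h1, h2⟩
      exact absurd h2 (not_lt.mpr (hfr j h1))
    · intro k hk
      exfalso
      have := k.isLt
      simp only [Fin.lt_def] at hk
      omega
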